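/- Let R > 0, κ ≠ 0, Ω and N be real numbers with N² > R²Ω². Then the double series Σ'_{(n,k)} |R²(κn + iΩk)² + N²k²|^{−3/2}, where the sum runs over all pairs of integers (n,k) ∈ ℤ × ℤ excluding (n,k) = (0,0) and |·| denotes the complex absolute value, converges (the indexed family is summable). -/

import Mathlib

open EisensteinSeries in
lemma aux_sum15 : Summable (fun q : ℤ × ℤ => ‖(finTwoArrowEquiv ℤ).symm q‖ ^ (-(3:ℝ))) :=
  ((finTwoArrowEquiv ℤ).symm.summable_iff).mpr
    (summable_one_div_norm_rpow (by norm_num))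

lemma aux_re15 (R κ Ω N : ℝ) (n k : ℤ) :
    ((R : ℂ) ^ 2 * ((κ : ℂ) * (n : ℂ) + Complex.I * (Ω : ℂ) * (k : ℂ)) ^ 2
      + (N : ℂ) ^ 2 * (k : ℂ) ^ 2).re
      = R ^ 2 * κ ^ 2 * (n : ℝ) ^ 2 + (N ^ 2 - R ^ 2 * Ω ^ 2) * (k : ℝ) ^ 2 := by
  simp [Complex.add_re, Complex.mul_re, Complex.mul_im, pow_two]
  ring

/-- for R > 0, κ ≠ 0, N² > R²Ω², the family
(n,k) ↦ |R²(κn + iΩk)² + N²k²|^{−3/2}, indexed by pairs of integers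
(n,k) ≠ (0,0), is summable. -/
theorem stmt15 (R κ Ω N : ℝ) (hR : 0 < R) (hκ : κ ≠ 0) (hN : R ^ 2 * Ω ^ 2 < N ^ 2) :
    Summable (fun p : {q : ℤ × ℤ // q ≠ 0} =>
      (‖(R : ℂ) ^ 2
          * ((κ : ℂ) * (((p : ℤ × ℤ).1 : ℤ) : ℂ)
            + Complex.I * (Ω : ℂ) * (((p : ℤ × ℤ).2 : ℤ) : ℂ)) ^ 2
          + (N : ℂ) ^ 2 * (((p : ℤ × ℤ).2 : ℤ) : ℂ) ^ 2‖) ^ (-(3 : ℝ) / 2)) := by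
  set c : ℝ := min (R ^ 2 * κ ^ 2) (N ^ 2 - R ^ 2 * Ω ^ 2) with hc
  have hc0 : 0 < c := lt_min (by positivity) (by linarith)
  have hsum : Summable (fun p : {q : ℤ × ℤ // q ≠ 0} =>
      c ^ (-(3:ℝ)/2) * ‖(finTwoArrowEquiv ℤ).symm (p : ℤ × ℤ)‖ ^ (-(3:ℝ))) :=
    (aux_sum15.subtype _).mul_left _
  refine Summable.of_nonneg_of_le (fun p => by positivity) (fun p => ?_) hsum
  obtain ⟨⟨n, k⟩, hp⟩ := p
  set M : ℝ := ‖(finTwoArrowEquiv ℤ).symm (n, k)‖ with hM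
  have hMmax : M = max (|(n:ℝ)|) (|(k:ℝ)|) := by
    rw [hM, EisensteinSeries.norm_eq_max_natAbs]
    simp [Nat.cast_natAbs]
  have hnk : n ≠ 0 ∨ k ≠ 0 := by
    rcases eq_or_ne n 0 with hn | hn
    · exact Or.inr fun hk => hp (by simp [hn, hk, Prod.ext_iff])
    · exact Or.inl hn
  have hM1 : 1 ≤ M := by
    rw [hMmax]
    rcases hnk with h | h
    · exact le_max_of_le_left (by exact_mod_cast Int.one_le_abs h)
    · exact le_max_of_le_right (by exact_mod_cast Int.one_le_abs h)
  have hM0 : 0 < M := lt_of_lt_of_le one_pos hM1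
  have hMsq : M ^ 2 ≤ (n:ℝ) ^ 2 + (k:ℝ) ^ 2 := by
    rw [hMmax]
    rcases max_cases (|(n:ℝ)|) (|(k:ℝ)|) with ⟨h, _⟩ | ⟨h, _⟩ <;> rw [h, sq_abs] <;> nlinarith [sq_nonneg (n:ℝ), sq_nonneg (k:ℝ)]
  set z : ℂ := (R : ℂ) ^ 2 * ((κ : ℂ) * (n : ℂ) + Complex.I * (Ω : ℂ) * (k : ℂ)) ^ 2
      + (N : ℂ) ^ 2 * (k : ℂ) ^ 2 with hz
  have hre : z.re = R ^ 2 * κ ^ 2 * (n : ℝ) ^ 2 + (N ^ 2 - R ^ 2 * Ω ^ 2) * (k : ℝ) ^ 2 :=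
    aux_re15 R κ Ω N n k
  have hlow : c * M ^ 2 ≤ ‖z‖ := by
    refine le_trans ?_ (Complex.re_le_norm z)
    rw [hre]
    have h1 : c ≤ R ^ 2 * κ ^ 2 := min_le_left _ _
    have h2 : c ≤ N ^ 2 - R ^ 2 * Ω ^ 2 := min_le_right _ _
    nlinarith [sq_nonneg (n:ℝ), sq_nonneg (k:ℝ)]
  have hpos : 0 < c * M ^ 2 := by positivity
  calc ‖z‖ ^ (-(3:ℝ)/2) ≤ (c * M ^ 2) ^ (-(3:ℝ)/2) :=
        Real.rpow_le_rpow_of_nonpos hpos hlow (by norm_num)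
    _ = c ^ (-(3:ℝ)/2) * M ^ (-(3:ℝ)) := by
        rw [Real.mul_rpow hc0.le (by positivity), ← Real.rpow_natCast M 2,
          ← Real.rpow_mul hM0.le]
        norm_num
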